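/- For k odd, the Clifford quadratic form α_Cl(2k,0) on (Z/2)^{2k} is equivalent to the direct sum of (k+1)/2 copies of α_Cl(2,0) and (k−1)/2 copies of α_Cl(0,2); and α_Cl(0,2k) is equivalent to the direct sum of (k−1)/2 copies of α_Cl(2,0) and (k+1)/2 copies of α_Cl(0,2). -/

import Mathlib

/-- The Clifford generating quadratic form `α_Cl(p,q)` on `(ℤ/2)^m`, `m = p+q`:
`Σ_{i<j} x_i x_j + Σ_{i>p} x_i` (0-based: linear terms for indices `≥ p`). -/
def cliffordForm (p q : ℕ) (x : Fin (p + q) → ZMod 2) : ZMod 2 :=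
  (∑ t ∈ Finset.univ.filter
      (fun t : Fin (p + q) × Fin (p + q) => t.1 < t.2), x t.1 * x t.2)
  + ∑ i ∈ Finset.univ.filter (fun i : Fin (p + q) => p ≤ (i : ℕ)), x i

open Finset

lemma zmod2_sq : ∀ a : ZMod 2, a * a = a := by decide
lemma zmod2_add_self : ∀ a : ZMod 2, a + a = 0 := by decide

/-- prefix sum -/
def tpre (y : ℕ → ZMod 2) (m : ℕ) : ZMod 2 := ∑ i ∈ range (2*m), y i

lemma pair_sum (m : ℕ) (g : ℕ → ZMod 2) :
    ∑ i ∈ range (2*m), g i = ∑ j ∈ range m, (g (2*j) + g (2*j+1)) := by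
  induction m with
  | zero => simp
  | succ m ih =>
    have h : 2*(m+1) = 2*m + 1 + 1 := by ring
    rw [h, sum_range_succ, sum_range_succ, sum_range_succ, ih, add_assoc]

lemma core (k : ℕ) (y : ℕ → ZMod 2) :
    ∑ j ∈ range (2*k), ∑ i ∈ range j, y i * y j
    = ∑ m ∈ range k, ((y (2*m) + tpre y m) * (y (2*m+1) + tpre y m) + tpre y m) := by
  induction k with
  | zero => simp
  | succ k ih =>
    have h : 2*(k+1) = 2*k + 1 + 1 := by ring
    rw [h, sum_range_succ, sum_range_succ, sum_range_succ, ih]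
    have h1 : ∑ i ∈ range (2*k), y i * y (2*k) = tpre y k * y (2*k) := by
      rw [tpre, sum_mul]
    have h2 : ∑ i ∈ range (2*k), y i * y (2*k+1) = tpre y k * y (2*k+1) := by
      rw [tpre, sum_mul]
    rw [h1, h2, sum_range_succ]
    linear_combination -zmod2_add_self (tpre y k) - zmod2_add_self (tpre y k * tpre y k) + zmod2_sq (tpre y k) + zmod2_add_self (tpre y k)

lemma nsmul_zmod2 (n : ℕ) (a : ZMod 2) : n • a = if n % 2 = 1 then a else 0 := by
  have h : n % 2 + 2 * (n / 2) = n := Nat.mod_add_div n 2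
  rw [← h, add_nsmul, mul_nsmul, two_nsmul, zmod2_add_self, smul_zero, add_zero]
  rcases Nat.mod_two_eq_zero_or_one n with h2 | h2 <;> simp [h2]

lemma sum_prefix (k : ℕ) (L : ℕ → ZMod 2) :
    ∑ m ∈ range k, ∑ i ∈ range m, L i
      = ∑ i ∈ range k, (if (k - 1 - i) % 2 = 1 then L i else 0) := by
  have key : ∀ k, ∑ m ∈ range k, ∑ i ∈ range m, L i
      = ∑ i ∈ range k, (k - 1 - i) • L i := by
    intro k
    induction k with
    | zero => simp
    | succ k ih =>
      rw [sum_range_succ, ih]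
      have : ∀ i ∈ range k, (k + 1 - 1 - i) • L i = (k - 1 - i) • L i + L i := by
        intro i hi
        simp only [mem_range] at hi
        have : k + 1 - 1 - i = (k - 1 - i) + 1 := by omega
        rw [this, succ_nsmul]
      rw [sum_range_succ, sum_congr rfl this, sum_add_distrib]
      simp
  rw [key]
  exact sum_congr rfl fun i _ => nsmul_zmod2 _ _

lemma sum_tpre (k : ℕ) (y : ℕ → ZMod 2) :
    ∑ m ∈ range k, tpre y m
      = ∑ i ∈ range k, (if (k - 1 - i) % 2 = 1 then y (2*i) + y (2*i+1) else 0) := by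
  calc ∑ m ∈ range k, tpre y m
      = ∑ m ∈ range k, ∑ i ∈ range m, (y (2*i) + y (2*i+1)) := by
        exact sum_congr rfl fun m _ => pair_sum m y
    _ = _ := sum_prefix k _

/-- `tpre` of the transformed vector (ℕ-level T) equals `tpre` of the original. -/
lemma tpre_T (k : ℕ) (y : ℕ → ZMod 2) (m : ℕ) :
    tpre (fun i => y i + tpre y (i / 2)) m = tpre y m := by
  rw [show tpre (fun i => y i + tpre y (i / 2)) m
      = ∑ j ∈ range m, ((y (2*j) + tpre y (2*j/2)) + (y (2*j+1) + tpre y ((2*j+1)/2)))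
      from pair_sum m _,
    show tpre y m = ∑ j ∈ range m, (y (2*j) + y (2*j+1)) from pair_sum m y]
  refine sum_congr rfl fun j _ => ?_
  have h1 : 2 * j / 2 = j := by omega
  have h2 : (2 * j + 1) / 2 = j := by omega
  rw [h1, h2]
  have := zmod2_add_self (tpre y j)
  linear_combination this

/-- ℕ-level triangular transformation. -/
def Tn (y : ℕ → ZMod 2) : ℕ → ZMod 2 := fun i => y i + tpre y (i / 2)

lemma Tn_invol (y : ℕ → ZMod 2) : Tn (Tn y) = y := by
  funext i
  show Tn y i + tpre (Tn y) (i / 2) = y i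
  rw [show tpre (Tn y) (i/2) = tpre y (i/2) from tpre_T 0 y (i/2)]
  show y i + tpre y (i/2) + tpre y (i/2) = y i
  rw [add_assoc, zmod2_add_self, add_zero]

lemma main_quad (k : ℕ) (y : ℕ → ZMod 2) :
    ∑ j ∈ range (2*k), ∑ i ∈ range j, Tn y i * Tn y j
    = ∑ m ∈ range k, (y (2*m) * y (2*m+1) + tpre y m) := by
  rw [core k (Tn y)]
  refine sum_congr rfl fun m hm => ?_
  have ht : tpre (Tn y) m = tpre y m := tpre_T 0 y m
  have h1 : 2 * m / 2 = m := by omega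
  have h2 : (2 * m + 1) / 2 = m := by omega
  have e1 : Tn y (2*m) + tpre (Tn y) m = y (2*m) := by
    rw [ht]; show y (2*m) + tpre y (2*m/2) + tpre y m = y (2*m)
    rw [h1, add_assoc, zmod2_add_self, add_zero]
  have e2 : Tn y (2*m+1) + tpre (Tn y) m = y (2*m+1) := by
    rw [ht]; show y (2*m+1) + tpre y ((2*m+1)/2) + tpre y m = y (2*m+1)
    rw [h2, add_assoc, zmod2_add_self, add_zero]
  rw [e1, e2, ht]

lemma main_lin (k : ℕ) (y : ℕ → ZMod 2) :
    ∑ i ∈ range (2*k), Tn y i = ∑ i ∈ range (2*k), y i := by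
  show tpre (Tn y) k = tpre y k
  exact tpre_T 0 y k

/-- Extend a `Fin n`-indexed vector by zero. -/
def extF {n : ℕ} (y : Fin n → ZMod 2) : ℕ → ZMod 2 :=
  fun i => if h : i < n then y ⟨i, h⟩ else 0

lemma extF_coe {n : ℕ} (y : Fin n → ZMod 2) (i : Fin n) : extF y (i : ℕ) = y i := by
  simp [extF, i.isLt]

lemma sum_ite_range (n m : ℕ) (h : m ≤ n) (f : ℕ → ZMod 2) :
    ∑ i ∈ range n, (if i < m then f i else 0) = ∑ i ∈ range m, f i := by
  rw [← Finset.sum_filter]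
  refine sum_congr ?_ (fun _ _ => rfl)
  ext i
  simp only [mem_filter, mem_range]
  omega

lemma quad_ext {n : ℕ} (y : Fin n → ZMod 2) :
    (∑ t ∈ Finset.univ.filter (fun t : Fin n × Fin n => t.1 < t.2), y t.1 * y t.2)
    = ∑ j ∈ range n, ∑ i ∈ range j, extF y i * extF y j := by
  rw [Finset.sum_filter, Fintype.sum_prod_type, Finset.sum_comm]
  have inner : ∀ b : Fin n, (∑ a : Fin n, if (a, b).1 < (a, b).2 then y a * y b else 0)
      = ∑ i ∈ range (b : ℕ), extF y i * extF y (b : ℕ) := by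
    intro b
    calc ∑ a : Fin n, (if (a, b).1 < (a, b).2 then y a * y b else 0)
        = ∑ a : Fin n, (fun a' : ℕ =>
            if a' < (b : ℕ) then extF y a' * extF y (b : ℕ) else 0) (a : ℕ) := by
          refine sum_congr rfl fun a _ => ?_
          simp only [extF_coe, Fin.lt_def]
      _ = ∑ i ∈ range n, (if i < (b : ℕ) then extF y i * extF y (b : ℕ) else 0) := by
          exact Fin.sum_univ_eq_sum_range
            (fun a' : ℕ => if a' < (b : ℕ) then extF y a' * extF y (b : ℕ) else 0) n
      _ = ∑ i ∈ range (b : ℕ), extF y i * extF y (b : ℕ) :=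
          sum_ite_range n _ (le_of_lt b.isLt) _
  calc ∑ b : Fin n, ∑ a : Fin n, (if (a, b).1 < (a, b).2 then y a * y b else 0)
      = ∑ b : Fin n, (fun b' : ℕ => ∑ i ∈ range b', extF y i * extF y b') (b : ℕ) := by
        refine sum_congr rfl fun b _ => ?_
        exact inner b
    _ = ∑ j ∈ range n, ∑ i ∈ range j, extF y i * extF y j := by
        exact Fin.sum_univ_eq_sum_range
          (fun b' : ℕ => ∑ i ∈ range b', extF y i * extF y b') n

lemma lin_ext {n p : ℕ} (y : Fin n → ZMod 2) :
    (∑ i ∈ Finset.univ.filter (fun i : Fin n => p ≤ (i : ℕ)), y i)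
    = ∑ i ∈ range n, (if p ≤ i then extF y i else 0) := by
  rw [Finset.sum_filter]
  calc ∑ i : Fin n, (if p ≤ (i : ℕ) then y i else 0)
      = ∑ i : Fin n, (fun i' : ℕ => if p ≤ i' then extF y i' else 0) (i : ℕ) := by
        refine sum_congr rfl fun i _ => ?_
        simp only [extF_coe]
    _ = _ := by
        exact Fin.sum_univ_eq_sum_range (fun i' : ℕ => if p ≤ i' then extF y i' else 0) n

lemma clifford_ext (p q : ℕ) (w : Fin (p+q) → ZMod 2) :
    cliffordForm p q w
    = (∑ j ∈ range (p+q), ∑ i ∈ range j, extF w i * extF w j)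
      + ∑ i ∈ range (p+q), (if p ≤ i then extF w i else 0) := by
  unfold cliffordForm
  rw [quad_ext, lin_ext]

lemma extF_cast {n n' : ℕ} (h : n' = n) (x : Fin n → ZMod 2) :
    extF (fun i : Fin n' => x (Fin.cast h i)) = extF x := by
  subst h
  rfl

/-- The triangular transformation as a linear map. -/
def TFin (k : ℕ) : (Fin (2*k) → ZMod 2) →ₗ[ZMod 2] (Fin (2*k) → ZMod 2) where
  toFun y := fun i => y i
    + ∑ j ∈ Finset.univ.filter (fun j : Fin (2*k) => (j : ℕ) < 2*((i : ℕ)/2)), y j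
  map_add' y z := by
    funext i
    simp only [Pi.add_apply, Finset.sum_add_distrib]
    ring
  map_smul' c y := by
    funext i
    simp only [Pi.smul_apply, smul_eq_mul, RingHom.id_apply, Finset.mul_sum, mul_add]

lemma filter_sum_tpre (k : ℕ) (y : Fin (2*k) → ZMod 2) (m : ℕ) (hm : m ≤ k) :
    ∑ j ∈ Finset.univ.filter (fun j : Fin (2*k) => (j : ℕ) < 2*m), y j
      = tpre (extF y) m := by
  rw [Finset.sum_filter]
  calc ∑ j : Fin (2*k), (if (j : ℕ) < 2*m then y j else 0)
      = ∑ j : Fin (2*k), (fun j' : ℕ => if j' < 2*m then extF y j' else 0) (j : ℕ) := by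
        refine sum_congr rfl fun j _ => ?_
        simp only [extF_coe]
    _ = ∑ i ∈ range (2*k), (if i < 2*m then extF y i else 0) := by
        exact Fin.sum_univ_eq_sum_range (fun j' : ℕ => if j' < 2*m then extF y j' else 0) _
    _ = ∑ i ∈ range (2*m), extF y i := sum_ite_range _ _ (by omega) _

lemma TFin_apply (k : ℕ) (y : Fin (2*k) → ZMod 2) (i : Fin (2*k)) :
    TFin k y i = Tn (extF y) (i : ℕ) := by
  show y i + _ = extF y (i : ℕ) + tpre (extF y) ((i : ℕ)/2)
  rw [filter_sum_tpre k y ((i : ℕ)/2) (by have := i.isLt; omega), extF_coe]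

lemma extF_TFin (k : ℕ) (y : Fin (2*k) → ZMod 2) (i : ℕ) (hi : i < 2*k) :
    extF (TFin k y) i = Tn (extF y) i := by
  have : extF (TFin k y) i = TFin k y ⟨i, hi⟩ := by simp [extF, hi]
  rw [this, TFin_apply]

lemma Tn_congr (f g : ℕ → ZMod 2) (i : ℕ) (h : ∀ j, j ≤ i → f j = g j) :
    Tn f i = Tn g i := by
  unfold Tn tpre
  rw [h i le_rfl]
  congr 1
  refine sum_congr rfl fun j hj => ?_
  rw [mem_range] at hj
  exact h j (by omega)

lemma TFin_invol (k : ℕ) : Function.Involutive (TFin k) := by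
  intro y
  funext i
  rw [TFin_apply]
  have h1 : Tn (extF (TFin k y)) (i : ℕ) = Tn (Tn (extF y)) (i : ℕ) := by
    refine Tn_congr _ _ _ fun j hj => ?_
    exact extF_TFin k y j (lt_of_le_of_lt hj i.isLt)
  rw [h1, Tn_invol, extF_coe]

lemma quad_TFin (k : ℕ) (z : Fin (2*k) → ZMod 2) :
    ∑ j ∈ range (2*k), ∑ i ∈ range j, extF (TFin k z) i * extF (TFin k z) j
    = ∑ m ∈ range k, (extF z (2*m) * extF z (2*m+1) + tpre (extF z) m) := by
  calc ∑ j ∈ range (2*k), ∑ i ∈ range j, extF (TFin k z) i * extF (TFin k z) j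
      = ∑ j ∈ range (2*k), ∑ i ∈ range j, Tn (extF z) i * Tn (extF z) j := by
        refine sum_congr rfl fun j hj => sum_congr rfl fun i hi => ?_
        rw [mem_range] at hj hi
        rw [extF_TFin k z i (by omega), extF_TFin k z j (by omega)]
    _ = _ := main_quad k (extF z)

lemma lin_TFin (k : ℕ) (z : Fin (2*k) → ZMod 2) :
    ∑ i ∈ range (2*k), extF (TFin k z) i = ∑ i ∈ range (2*k), extF z i := by
  calc ∑ i ∈ range (2*k), extF (TFin k z) i
      = ∑ i ∈ range (2*k), Tn (extF z) i := by
        refine sum_congr rfl fun i hi => ?_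
        rw [mem_range] at hi
        exact extF_TFin k z i (by omega)
    _ = _ := main_lin k (extF z)

lemma final_sum1 (k : ℕ) (z : Fin (2*k) → ZMod 2) :
    ∑ j ∈ range (2*k), ∑ i ∈ range j, extF (TFin k z) i * extF (TFin k z) j
    = ∑ m ∈ range k, (extF z (2*m) * extF z (2*m+1)
        + if (k-1-m) % 2 = 1 then extF z (2*m) + extF z (2*m+1) else 0) := by
  rw [quad_TFin, sum_add_distrib, sum_tpre, ← sum_add_distrib]

lemma final_sum2 (k : ℕ) (z : Fin (2*k) → ZMod 2) :
    (∑ j ∈ range (2*k), ∑ i ∈ range j, extF (TFin k z) i * extF (TFin k z) j)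
      + ∑ i ∈ range (2*k), extF (TFin k z) i
    = ∑ m ∈ range k, (extF z (2*m) * extF z (2*m+1)
        + if (k-1-m) % 2 = 0 then extF z (2*m) + extF z (2*m+1) else 0) := by
  rw [final_sum1, lin_TFin, pair_sum k (extF z), ← sum_add_distrib]
  refine sum_congr rfl fun m hm => ?_
  have hx := zmod2_add_self (extF z (2*m) + extF z (2*m+1))
  split_ifs with h1 h2 h2 <;> first | omega | linear_combination hx | linear_combination (0 : ZMod 2) = 0 | ring

/-- Block permutation on `Fin k` (parametrized; sends parity class `par` to `[c, k)`). -/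
def permF (k c par : ℕ) (m : Fin k) : Fin k :=
  ⟨min (if (m : ℕ) % 2 = par then c + (m : ℕ)/2 else (m : ℕ)/2) (k-1),
   by have := m.isLt; omega⟩

/-- The induced permutation on pairs in `Fin (2*k)`. -/
def bigF (k : ℕ) (e : Fin k ≃ Fin k) (i : Fin (2*k)) : Fin (2*k) :=
  ⟨2*((e ⟨(i : ℕ)/2, by have := i.isLt; omega⟩ : Fin k) : ℕ) + (i : ℕ) % 2,
   by have := (e ⟨(i : ℕ)/2, by have := i.isLt; omega⟩).isLt; omega⟩

lemma bigF_val (k : ℕ) (e : Fin k ≃ Fin k) (i : Fin (2*k)) :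
    (bigF k e i : ℕ) = 2*((e ⟨(i : ℕ)/2, by have := i.isLt; omega⟩ : Fin k) : ℕ)
      + (i : ℕ) % 2 := rfl

lemma bigF_even (k : ℕ) (e : Fin k ≃ Fin k) (m : Fin k) (h : 2*(m : ℕ) < 2*k)
    (h2 : 2*((e m : Fin k) : ℕ) < 2*k) :
    bigF k e ⟨2*(m : ℕ), h⟩ = ⟨2*((e m : Fin k) : ℕ), h2⟩ := by
  apply Fin.ext
  rw [bigF_val]
  have hm : (⟨(((⟨2*(m : ℕ), h⟩ : Fin (2*k)) : ℕ))/2,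
      by have := (⟨2*(m : ℕ), h⟩ : Fin (2*k)).isLt; omega⟩ : Fin k) = m := by
    apply Fin.ext
    show 2*(m : ℕ)/2 = (m : ℕ)
    omega
  rw [hm]
  show 2*((e m : Fin k) : ℕ) + 2*(m : ℕ) % 2 = 2*((e m : Fin k) : ℕ)
  omega

lemma bigF_odd (k : ℕ) (e : Fin k ≃ Fin k) (m : Fin k) (h : 2*(m : ℕ)+1 < 2*k)
    (h2 : 2*((e m : Fin k) : ℕ)+1 < 2*k) :
    bigF k e ⟨2*(m : ℕ)+1, h⟩ = ⟨2*((e m : Fin k) : ℕ)+1, h2⟩ := by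
  apply Fin.ext
  rw [bigF_val]
  have hm : (⟨(((⟨2*(m : ℕ)+1, h⟩ : Fin (2*k)) : ℕ))/2,
      by have := (⟨2*(m : ℕ)+1, h⟩ : Fin (2*k)).isLt; omega⟩ : Fin k) = m := by
    apply Fin.ext
    show (2*(m : ℕ)+1)/2 = (m : ℕ)
    omega
  rw [hm]
  show 2*((e m : Fin k) : ℕ) + (2*(m : ℕ)+1) % 2 = 2*((e m : Fin k) : ℕ)+1
  omega

lemma clifford_ext1 (k : ℕ) (w : Fin (2*k) → ZMod 2) :
    cliffordForm (2*k) 0 w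
    = ∑ j ∈ range (2*k), ∑ i ∈ range j, extF w i * extF w j := by
  rw [clifford_ext]
  have h0 : ∑ i ∈ range (2*k+0), (if 2*k ≤ i then extF w i else 0) = 0 :=
    sum_eq_zero fun i hi => if_neg (by rw [mem_range] at hi; omega)
  rw [h0, add_zero]
  rfl

lemma clifford_ext2 (k : ℕ) (x : Fin (2*k) → ZMod 2) (h : 0+2*k = 2*k) :
    cliffordForm 0 (2*k) (fun i => x (Fin.cast h i))
    = (∑ j ∈ range (2*k), ∑ i ∈ range j, extF x i * extF x j)
      + ∑ i ∈ range (2*k), extF x i := by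
  rw [clifford_ext, extF_cast h x]
  have h0 : ∑ i ∈ range (0+2*k), (if 0 ≤ i then extF x i else 0)
      = ∑ i ∈ range (2*k), extF x i := by
    rw [h]
    exact sum_congr rfl fun i _ => if_pos (Nat.zero_le i)
  rw [h0, h]

lemma reindex_sum (k : ℕ) (e : Fin k ≃ Fin k) (x : Fin (2*k) → ZMod 2) (ε c : ℕ)
    (hcond : ∀ m : Fin k, ((k-1-(m : ℕ)) % 2 = ε ↔ c ≤ ((e m : Fin k) : ℕ))) :
    ∑ m ∈ range k,
      (extF (fun i => x (bigF k e i)) (2*m) * extF (fun i => x (bigF k e i)) (2*m+1)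
        + if (k-1-m) % 2 = ε then
            extF (fun i => x (bigF k e i)) (2*m) + extF (fun i => x (bigF k e i)) (2*m+1)
          else 0)
    = ∑ j : Fin k,
        (x ⟨2*(j : ℕ), by have : (j : ℕ) + 1 ≤ k := j.isLt; omega⟩ * x ⟨2*(j : ℕ)+1, by have : (j : ℕ) + 1 ≤ k := j.isLt; omega⟩
          + if c ≤ (j : ℕ) then
              x ⟨2*(j : ℕ), by have : (j : ℕ) + 1 ≤ k := j.isLt; omega⟩ + x ⟨2*(j : ℕ)+1, by have : (j : ℕ) + 1 ≤ k := j.isLt; omega⟩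
            else 0) := by
  have hz : ∀ (j : ℕ) (hj : j < 2*k),
      extF (fun i => x (bigF k e i)) j = x (bigF k e ⟨j, hj⟩) := by
    intro j hj
    simp [extF, hj]
  calc ∑ m ∈ range k,
      (extF (fun i => x (bigF k e i)) (2*m) * extF (fun i => x (bigF k e i)) (2*m+1)
        + if (k-1-m) % 2 = ε then
            extF (fun i => x (bigF k e i)) (2*m) + extF (fun i => x (bigF k e i)) (2*m+1)
          else 0)
      = ∑ m : Fin k, (fun m' : ℕ =>
          extF (fun i => x (bigF k e i)) (2*m') * extF (fun i => x (bigF k e i)) (2*m'+1)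
            + if (k-1-m') % 2 = ε then
                extF (fun i => x (bigF k e i)) (2*m') + extF (fun i => x (bigF k e i)) (2*m'+1)
              else 0) (m : ℕ) := (Fin.sum_univ_eq_sum_range _ k).symm
    _ = ∑ m : Fin k, (fun j : Fin k =>
          x ⟨2*(j : ℕ), by have : (j : ℕ) + 1 ≤ k := j.isLt; omega⟩ * x ⟨2*(j : ℕ)+1, by have : (j : ℕ) + 1 ≤ k := j.isLt; omega⟩
          + if c ≤ (j : ℕ) then
              x ⟨2*(j : ℕ), by have : (j : ℕ) + 1 ≤ k := j.isLt; omega⟩ + x ⟨2*(j : ℕ)+1, by have : (j : ℕ) + 1 ≤ k := j.isLt; omega⟩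
            else 0) (e m) := by
        refine sum_congr rfl fun m _ => ?_
        have hm2 : 2*(m : ℕ) < 2*k := by have := m.isLt; omega
        have hm21 : 2*(m : ℕ)+1 < 2*k := by have := m.isLt; omega
        have he2 : 2*((e m : Fin k) : ℕ) < 2*k := by have := (e m).isLt; omega
        have he21 : 2*((e m : Fin k) : ℕ)+1 < 2*k := by have := (e m).isLt; omega
        simp only
        rw [hz _ hm2, hz _ hm21, bigF_even k e m hm2 he2, bigF_odd k e m hm21 he21]
        simp only [hcond m]
    _ = _ := by
        exact Equiv.sum_comp e (fun j : Fin k =>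
          x ⟨2*(j : ℕ), by have : (j : ℕ) + 1 ≤ k := j.isLt; omega⟩ * x ⟨2*(j : ℕ)+1, by have : (j : ℕ) + 1 ≤ k := j.isLt; omega⟩
          + if c ≤ (j : ℕ) then
              x ⟨2*(j : ℕ), by have : (j : ℕ) + 1 ≤ k := j.isLt; omega⟩ + x ⟨2*(j : ℕ)+1, by have : (j : ℕ) + 1 ≤ k := j.isLt; omega⟩
            else 0)

/-- for odd `k`, `α_Cl(2k,0)` is equivalent to the direct sum of
`(k+1)/2` copies of `α_Cl(2,0)(u,v) = uv` and `(k−1)/2` copies of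
`α_Cl(0,2)(u,v) = uv + u + v`, while `α_Cl(0,2k)` is equivalent to the direct
sum of `(k−1)/2` copies of `α_Cl(2,0)` and `(k+1)/2` copies of `α_Cl(0,2)`. -/
theorem stmt_8 (k : ℕ) (hk : Odd k) :
    let τ₁ : (Fin (2 * k) → ZMod 2) → ZMod 2 := fun x =>
      ∑ j : Fin k,
        (x ⟨2 * (j : ℕ), by have := j.isLt; omega⟩ *
           x ⟨2 * (j : ℕ) + 1, by have := j.isLt; omega⟩
         + if (k + 1) / 2 ≤ (j : ℕ) then
             x ⟨2 * (j : ℕ), by have := j.isLt; omega⟩ +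
               x ⟨2 * (j : ℕ) + 1, by have := j.isLt; omega⟩
           else 0)
    let τ₂ : (Fin (2 * k) → ZMod 2) → ZMod 2 := fun x =>
      ∑ j : Fin k,
        (x ⟨2 * (j : ℕ), by have := j.isLt; omega⟩ *
           x ⟨2 * (j : ℕ) + 1, by have := j.isLt; omega⟩
         + if (k - 1) / 2 ≤ (j : ℕ) then
             x ⟨2 * (j : ℕ), by have := j.isLt; omega⟩ +
               x ⟨2 * (j : ℕ) + 1, by have := j.isLt; omega⟩
           else 0)
    let α₁ : (Fin (2 * k) → ZMod 2) → ZMod 2 := fun x =>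
      cliffordForm (2 * k) 0 (fun i => x (Fin.cast (by omega) i))
    let α₂ : (Fin (2 * k) → ZMod 2) → ZMod 2 := fun x =>
      cliffordForm 0 (2 * k) (fun i => x (Fin.cast (by omega) i))
    (∃ G : (Fin (2 * k) → ZMod 2) ≃ₗ[ZMod 2] (Fin (2 * k) → ZMod 2),
        ∀ x, α₁ (G x) = τ₁ x) ∧
    (∃ G : (Fin (2 * k) → ZMod 2) ≃ₗ[ZMod 2] (Fin (2 * k) → ZMod 2),
        ∀ x, α₂ (G x) = τ₂ x) := by
  obtain ⟨l, hl⟩ := hk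
  intro τ₁ τ₂ α₁ α₂
  constructor
  · -- case 1
    have hval : ∀ m : Fin k, ((permF k ((k+1)/2) 1 m : Fin k) : ℕ)
        = if (m : ℕ) % 2 = 1 then (k+1)/2 + (m : ℕ)/2 else (m : ℕ)/2 := by
      intro m
      have hm := m.isLt
      show min _ _ = _
      split_ifs with h <;> omega
    have hinj : Function.Injective (permF k ((k+1)/2) 1) := by
      intro a b hab
      have h := congrArg Fin.val hab
      rw [hval a, hval b] at h
      have ha := a.isLt
      have hb := b.isLt
      apply Fin.ext
      split_ifs at h <;> omega
    set e : Fin k ≃ Fin k :=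
      Equiv.ofBijective _ (Finite.injective_iff_bijective.mp hinj) with hedef
    have he : ∀ m, e m = permF k ((k+1)/2) 1 m := fun _ => rfl
    have hbinj : Function.Injective (bigF k e) := by
      intro a b hab
      have h := congrArg Fin.val hab
      rw [bigF_val, bigF_val] at h
      have h1 : e ⟨(a : ℕ)/2, by have := a.isLt; omega⟩
          = e ⟨(b : ℕ)/2, by have := b.isLt; omega⟩ := Fin.ext (by omega)
      have h2 := congrArg Fin.val (e.injective h1)
      simp only [Fin.val_mk] at h2
      apply Fin.ext
      have := a.isLt
      have := b.isLt
      omega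
    set ρ : Fin (2*k) ≃ Fin (2*k) :=
      Equiv.ofBijective _ (Finite.injective_iff_bijective.mp hbinj) with hρdef
    set P := LinearEquiv.funCongrLeft (ZMod 2) (ZMod 2) ρ with hPdef
    set T := LinearEquiv.ofInvolutive (TFin k) (TFin_invol k) with hTdef
    refine ⟨P.trans T, fun x => ?_⟩
    have hGx : (P.trans T) x = TFin k (fun i => x (bigF k e i)) := rfl
    have hcond : ∀ m : Fin k,
        ((k-1-(m : ℕ)) % 2 = 1 ↔ (k+1)/2 ≤ ((e m : Fin k) : ℕ)) := by
      intro m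
      rw [he m, hval m]
      have := m.isLt
      split_ifs with h <;> omega
    show cliffordForm (2*k) 0 ((P.trans T) x) = τ₁ x
    rw [clifford_ext1, hGx, final_sum1, reindex_sum k e x 1 ((k+1)/2) hcond]
  · -- case 2
    have hval : ∀ m : Fin k, ((permF k ((k-1)/2) 0 m : Fin k) : ℕ)
        = if (m : ℕ) % 2 = 0 then (k-1)/2 + (m : ℕ)/2 else (m : ℕ)/2 := by
      intro m
      have hm := m.isLt
      show min _ _ = _
      split_ifs with h <;> omega
    have hinj : Function.Injective (permF k ((k-1)/2) 0) := by
      intro a b hab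
      have h := congrArg Fin.val hab
      rw [hval a, hval b] at h
      have ha := a.isLt
      have hb := b.isLt
      apply Fin.ext
      split_ifs at h <;> omega
    set e : Fin k ≃ Fin k :=
      Equiv.ofBijective _ (Finite.injective_iff_bijective.mp hinj) with hedef
    have he : ∀ m, e m = permF k ((k-1)/2) 0 m := fun _ => rfl
    have hbinj : Function.Injective (bigF k e) := by
      intro a b hab
      have h := congrArg Fin.val hab
      rw [bigF_val, bigF_val] at h
      have h1 : e ⟨(a : ℕ)/2, by have := a.isLt; omega⟩
          = e ⟨(b : ℕ)/2, by have := b.isLt; omega⟩ := Fin.ext (by omega)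
      have h2 := congrArg Fin.val (e.injective h1)
      simp only [Fin.val_mk] at h2
      apply Fin.ext
      have := a.isLt
      have := b.isLt
      omega
    set ρ : Fin (2*k) ≃ Fin (2*k) :=
      Equiv.ofBijective _ (Finite.injective_iff_bijective.mp hbinj) with hρdef
    set P := LinearEquiv.funCongrLeft (ZMod 2) (ZMod 2) ρ with hPdef
    set T := LinearEquiv.ofInvolutive (TFin k) (TFin_invol k) with hTdef
    refine ⟨P.trans T, fun x => ?_⟩
    have hGx : (P.trans T) x = TFin k (fun i => x (bigF k e i)) := rfl
    have hcond : ∀ m : Fin k,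
        ((k-1-(m : ℕ)) % 2 = 0 ↔ (k-1)/2 ≤ ((e m : Fin k) : ℕ)) := by
      intro m
      rw [he m, hval m]
      have := m.isLt
      split_ifs with h <;> omega
    show cliffordForm 0 (2*k) (fun i => ((P.trans T) x) (Fin.cast (by omega) i)) = τ₂ x
    rw [clifford_ext2 k ((P.trans T) x) (by omega), hGx, final_sum2,
      reindex_sum k e x 0 ((k-1)/2) hcond]
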